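/- Let G = (V,E) be a finite graph with a nonnegative edge-weight function w, and let W be a finite nonempty set of nonnegative reals. If w_r assigns to each edge an independent uniformly random element of W, then with probability at least 1 − |V|⁵/(2|W|), the graph G is strongly min-unique with respect to w + w_r, i.e., for every k ∈ ℕ and every pair of vertices u,v, there is at most one minimum-weight path among u-v paths using at most k edges. -/

import Mathlib

open SimpleGraph

/-- The weight of a walk: the sum of the weights of its edges. -/
noncomputable def walkWeight {V : Type*} {G : SimpleGraph V} (w : Sym2 V → ℝ)
    {u v : V} (p : G.Walk u v) : ℝ :=
  (p.edges.map w).sum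

/-- `p` belongs to `SP^{(k)}_{u,v}`: it is a `u`-`v` path with at most `k` edges whose
weight is minimal among all `u`-`v` paths with at most `k` edges. -/
def IsMinK {V : Type*} (G : SimpleGraph V) (w : Sym2 V → ℝ) (k : ℕ)
    {u v : V} (p : G.Walk u v) : Prop :=
  p.IsPath ∧ p.length ≤ k ∧
    ∀ q : G.Walk u v, q.IsPath → q.length ≤ k → walkWeight w p ≤ walkWeight w q

/-- `G` is strongly min-unique with respect to `w`: `|SP^{(k)}_{u,v}| ≤ 1` for all `k, u, v`. -/
def StronglyMinUnique {V : Type*} (G : SimpleGraph V) (w : Sym2 V → ℝ) : Prop :=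
  ∀ (k : ℕ) (u v : V) (p q : G.Walk u v), IsMinK G w k p → IsMinK G w k q → p = q

lemma path_eq_of_edges {V : Type*} {G : SimpleGraph V} :
    ∀ {u v : V} (p q : G.Walk u v), p.IsPath → q.IsPath →
      (∀ e, e ∈ p.edges ↔ e ∈ q.edges) → p = q := by
  intro u v p
  induction p with
  | nil =>
    intro q _ hq he
    cases q with
    | nil => rfl
    | cons h q' =>
      exfalso
      have := (he _).mpr (List.mem_cons_self)
      simp [Walk.edges] at this
  | cons h p' ih =>
    rename_i a b c
    intro q hp hq he
    rw [Walk.cons_isPath_iff] at hp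
    cases q with
    | nil =>
      exfalso
      have := (he _).mp (List.mem_cons_self)
      simp [Walk.edges] at this
    | cons h2 q' =>
      rename_i d
      rw [Walk.cons_isPath_iff] at hq
      have hfe : s(a, b) ∈ (Walk.cons h2 q').edges := (he _).mp (List.mem_cons_self)
      rw [Walk.edges_cons, List.mem_cons] at hfe
      have hbd : b = d := by
        rcases hfe with hfe | hfe
        · rcases Sym2.eq_iff.mp hfe with ⟨_, rfl⟩ | ⟨rfl, rfl⟩
          · rfl
          · exact absurd h (G.irrefl)
        · exact absurd (Walk.fst_mem_support_of_mem_edges q' hfe) hq.2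
      subst hbd
      have hpq : p' = q' := by
        refine ih q' hp.1 hq.1 fun e => ?_
        constructor
        · intro hep
          have := (he e).mp (by simp [hep])
          rw [Walk.edges_cons, List.mem_cons] at this
          rcases this with rfl | h' 
          · exact absurd (Walk.fst_mem_support_of_mem_edges p' hep) hp.2
          · exact h'
        · intro heq
          have := (he e).mpr (by simp [heq])
          rw [Walk.edges_cons, List.mem_cons] at this
          rcases this with rfl | h'
          · exact absurd (Walk.fst_mem_support_of_mem_edges q' heq) hq.2
          · exact h'
      subst hpq; rfl

lemma walkWeight_diff {V : Type*} [DecidableEq V] {G : SimpleGraph V}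
    (w1 w2 : Sym2 V → ℝ) (e0 : Sym2 V) (hagree : ∀ e ≠ e0, w1 e = w2 e)
    {u v : V} (p : G.Walk u v) (hnd : p.edges.Nodup) :
    walkWeight w1 p = walkWeight w2 p + (if e0 ∈ p.edges then w1 e0 - w2 e0 else 0) := by
  unfold walkWeight
  induction p with
  | nil => simp
  | cons h p' ih =>
    rename_i a b c
    have hnd' : p'.edges.Nodup := (List.nodup_cons.mp (by simpa using hnd)).2
    have hhead : s(a, b) ∉ p'.edges := (List.nodup_cons.mp (by simpa using hnd)).1
    rw [Walk.edges_cons, List.map_cons, List.map_cons, List.sum_cons, List.sum_cons,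
      ih hnd']
    by_cases h1 : e0 = s(a, b)
    · subst h1
      rw [if_neg hhead, if_pos (by simp)]
      ring
    · rw [hagree _ (fun hh => h1 hh.symm)]
      simp only [List.mem_cons]
      have heq : (e0 = s(a, b) ∨ e0 ∈ p'.edges) ↔ e0 ∈ p'.edges := by
        constructor
        · rintro (rfl | h2)
          · exact absurd rfl h1
          · assumption
        · exact Or.inr
      rw [if_congr heq rfl rfl]; ring

noncomputable def pw {V : Type*} [DecidableEq V] (G : SimpleGraph V) [DecidableRel G.Adj]
    (w : Sym2 V → ℝ) (W : Finset ℝ) (f : G.edgeSet → W) : Sym2 V → ℝ :=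
  fun e => w e + if h : e ∈ G.edgeSet then (f ⟨e, h⟩ : ℝ) else 0

def Amb {V : Type*} [DecidableEq V] (G : SimpleGraph V) [DecidableRel G.Adj]
    (w : Sym2 V → ℝ) (W : Finset ℝ) (k : ℕ) (u v : V) (e0 : Sym2 V)
    (f : G.edgeSet → W) : Prop :=
  ∃ p q : G.Walk u v, IsMinK G (pw G w W f) k p ∧ IsMinK G (pw G w W f) k q ∧
    e0 ∈ p.edges ∧ e0 ∉ q.edges

lemma amb_inj {V : Type*} [DecidableEq V] {G : SimpleGraph V} [DecidableRel G.Adj]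
    {w : Sym2 V → ℝ} {W : Finset ℝ} {k : ℕ} {u v : V} (e0 : G.edgeSet)
    {f g : G.edgeSet → W} (hf : Amb G w W k u v e0 f) (hg : Amb G w W k u v e0 g)
    (hr : ∀ x : G.edgeSet, x ≠ e0 → f x = g x) : f = g := by
  obtain ⟨p, q, ⟨hpP, hpL, hpM⟩, ⟨hqP, hqL, hqM⟩, hpe, hqe⟩ := hf
  obtain ⟨p', q', ⟨hpP', hpL', hpM'⟩, ⟨hqP', hqL', hqM'⟩, hpe', hqe'⟩ := hg
  set F := pw G w W f with hF
  set Gw := pw G w W g with hG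
  have hagree : ∀ e ≠ (e0 : Sym2 V), F e = Gw e := by
    intro e he
    simp only [hF, hG, pw]
    congr 1
    split
    · next h =>
      have : (⟨e, h⟩ : G.edgeSet) ≠ e0 := fun hc => he (congrArg Subtype.val hc)
      exact congrArg Subtype.val (hr _ this)
    · rfl
  set d : ℝ := F e0 - Gw e0 with hd
  have diff : ∀ {a b : V} (r : G.Walk a b), r.IsPath →
      walkWeight F r = walkWeight Gw r + (if (e0 : Sym2 V) ∈ r.edges then d else 0) :=
    fun r hrp => walkWeight_diff F Gw e0 hagree r hrp.isTrail.edges_nodup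
  -- weights
  have hFq : walkWeight F q = walkWeight Gw q := by
    rw [diff q hqP, if_neg hqe]; ring
  have hGq' : walkWeight Gw q' = walkWeight F q' := by
    rw [diff q' hqP', if_neg hqe']; ring
  have hFp : walkWeight F p = walkWeight F q := le_antisymm
    (hpM q hqP hqL) (hqM p hpP hpL)
  have hGp' : walkWeight Gw p' = walkWeight Gw q' := le_antisymm
    (hpM' q' hqP' hqL') (hqM' p' hpP' hpL')
  have h1 : walkWeight F q ≤ walkWeight Gw q' := by
    rw [hGq']; exact hqM q' hqP' hqL'
  have h2 : walkWeight Gw q' ≤ walkWeight F q := by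
    rw [hFq]; exact hqM' q hqP hqL
  have hqq : walkWeight F q = walkWeight Gw q' := le_antisymm h1 h2
  have h3 : walkWeight F q ≤ walkWeight Gw q' + d := by
    calc walkWeight F q = walkWeight F p := hFp.symm
      _ ≤ walkWeight F p' := hpM p' hpP' hpL'
      _ = walkWeight Gw p' + d := by rw [diff p' hpP', if_pos hpe']
      _ = walkWeight Gw q' + d := by rw [hGp']
  have h4 : walkWeight Gw q' ≤ walkWeight F q - d := by
    calc walkWeight Gw q' = walkWeight Gw p' := hGp'.symm
      _ ≤ walkWeight Gw p := hpM' p hpP hpL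
      _ = walkWeight F p - d := by rw [diff p hpP, if_pos hpe]; ring
      _ = walkWeight F q - d := by rw [hFp]
  have hd0 : d = 0 := by rw [hqq] at h3 h4; linarith
  have he0 : f e0 = g e0 := by
    have h5 : F ↑e0 = w ↑e0 + (f e0 : ℝ) := by
      simp only [hF, pw, dif_pos e0.2, Subtype.coe_eta]
    have h6 : Gw ↑e0 = w ↑e0 + (g e0 : ℝ) := by
      simp only [hG, pw, dif_pos e0.2, Subtype.coe_eta]
    rw [hd] at hd0
    exact Subtype.ext (by linarith)
  funext x
  by_cases hx : x = e0
  · subst hx; exact he0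
  · exact hr x hx

open Classical in
lemma amb_card {V : Type*} [Fintype V] [DecidableEq V] (G : SimpleGraph V)
    [DecidableRel G.Adj] (w : Sym2 V → ℝ) (W : Finset ℝ) (k : ℕ) (u v : V)
    (e0 : Sym2 V) (he0 : e0 ∈ G.edgeSet) :
    (Finset.univ.filter fun f : G.edgeSet → W => Amb G w W k u v e0 f).card * W.card
      ≤ Fintype.card (G.edgeSet → W) := by
  set E0 : G.edgeSet := ⟨e0, he0⟩
  have hcard : (Finset.univ.filter fun f : G.edgeSet → W => Amb G w W k u v e0 f).card
      ≤ Fintype.card ({x : G.edgeSet // x ≠ E0} → W) := by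
    rw [← Finset.card_univ]
    apply Finset.card_le_card_of_injOn (fun f => (fun x : {x : G.edgeSet // x ≠ E0} => f x.1))
    · intro _ _; exact Finset.mem_univ _
    · intro f hf g hg hfg
      simp only [Finset.mem_coe, Finset.mem_filter] at hf hg
      refine amb_inj E0 hf.2 hg.2 fun x hx => ?_
      exact congrFun hfg ⟨x, hx⟩
  have hm : 1 ≤ Fintype.card G.edgeSet := Fintype.card_pos_iff.mpr ⟨E0⟩
  have h1 : Fintype.card ({x : G.edgeSet // x ≠ E0} → W)
      = W.card ^ (Fintype.card G.edgeSet - 1) := by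
    rw [Fintype.card_fun, Fintype.card_coe]
    congr 1
    simp [Fintype.card_subtype_compl]
  have h2 : Fintype.card (G.edgeSet → W) = W.card ^ Fintype.card G.edgeSet := by
    rw [Fintype.card_fun, Fintype.card_coe]
  calc _ ≤ W.card ^ (Fintype.card G.edgeSet - 1) * W.card := by
        exact Nat.mul_le_mul_right _ (h1 ▸ hcard)
    _ = W.card ^ Fintype.card G.edgeSet := by
        rw [← pow_succ, Nat.sub_add_cancel hm]
    _ = _ := h2.symm

lemma exists_amb {V : Type*} [Fintype V] [DecidableEq V] (G : SimpleGraph V)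
    [DecidableRel G.Adj] (w : Sym2 V → ℝ) (W : Finset ℝ) (f : G.edgeSet → W)
    (h : ¬ StronglyMinUnique G (pw G w W f)) :
    ∃ k < Fintype.card V, ∃ u v : V, ∃ e0 ∈ G.edgeSet, Amb G w W k u v e0 f := by
  unfold StronglyMinUnique at h
  push_neg at h
  obtain ⟨k, u, v, p, q, hp, hq, hne⟩ := h
  obtain ⟨hpP, hpL, hpM⟩ := hp
  obtain ⟨hqP, hqL, hqM⟩ := hq
  have hn : 1 ≤ Fintype.card V := Fintype.card_pos_iff.mpr ⟨u⟩
  set k' := min k (Fintype.card V - 1) with hk'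
  have hk'lt : k' < Fintype.card V := by omega
  have hlen : ∀ {r : G.Walk u v}, r.IsPath → r.length ≤ k → r.length ≤ k' := by
    intro r hr hrk
    have := hr.length_lt
    omega
  have hminp : IsMinK G (pw G w W f) k' p :=
    ⟨hpP, hlen hpP hpL, fun r hr hrk => hpM r hr (le_trans hrk (min_le_left _ _))⟩
  have hminq : IsMinK G (pw G w W f) k' q :=
    ⟨hqP, hlen hqP hqL, fun r hr hrk => hqM r hr (le_trans hrk (min_le_left _ _))⟩
  have hdiff : ∃ e, (e ∈ p.edges ∧ e ∉ q.edges) ∨ (e ∈ q.edges ∧ e ∉ p.edges) := by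
    by_contra hc
    push_neg at hc
    refine hne (path_eq_of_edges p q hpP hqP fun e => ?_)
    have := hc e
    tauto
  obtain ⟨e, he⟩ := hdiff
  rcases he with ⟨h1, h2⟩ | ⟨h1, h2⟩
  · exact ⟨k', hk'lt, u, v, e, p.edges_subset_edgeSet h1, p, q, hminp, hminq, h1, h2⟩
  · exact ⟨k', hk'lt, u, v, e, q.edges_subset_edgeSet h1, q, p, hminq, hminp, h1, h2⟩


open Classical in
theorem stmt2 {V : Type*} [Fintype V] [DecidableEq V] (G : SimpleGraph V)
    [DecidableRel G.Adj] (w : Sym2 V → ℝ) (hw : ∀ e, 0 ≤ w e)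
    (W : Finset ℝ) (hW : W.Nonempty) (hWpos : ∀ x ∈ W, 0 ≤ x) :
    (1 - (Fintype.card V : ℝ) ^ 5 / (2 * W.card)) * Fintype.card (G.edgeSet → W) ≤
      ((Finset.univ.filter fun f : G.edgeSet → W =>
        StronglyMinUnique G fun e =>
          w e + if h : e ∈ G.edgeSet then (f ⟨e, h⟩ : ℝ) else 0).card : ℝ) := by
  show (1 - (Fintype.card V : ℝ) ^ 5 / (2 * W.card)) * Fintype.card (G.edgeSet → W) ≤
      ((Finset.univ.filter fun f : G.edgeSet → W =>
        StronglyMinUnique G (pw G w W f)).card : ℝ)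
  set n := Fintype.card V with hn
  set N := Fintype.card (G.edgeSet → W) with hN
  set good := Finset.univ.filter fun f : G.edgeSet → W =>
    StronglyMinUnique G (pw G w W f) with hgood
  set bad := Finset.univ.filter fun f : G.edgeSet → W =>
    ¬ StronglyMinUnique G (pw G w W f) with hbad
  have hsplit : good.card + bad.card = N := by
    rw [hgood, hbad, Finset.card_filter_add_card_filter_not, Finset.card_univ]
  -- tuple finset and events
  set T : Finset (ℕ × V × V × Sym2 V) :=
    (Finset.range n) ×ˢ Finset.univ ×ˢ Finset.univ ×ˢ G.edgeFinset with hT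
  set A : (ℕ × V × V × Sym2 V) → Finset (G.edgeSet → W) := fun t =>
    Finset.univ.filter (fun f => Amb G w W t.1 t.2.1 t.2.2.1 t.2.2.2 f) with hA
  have hsub : bad ⊆ T.biUnion A := by
    intro f hf
    rw [hbad, Finset.mem_filter] at hf
    obtain ⟨k, hk, u, v, e0, he0, hamb⟩ := exists_amb G w W f hf.2
    refine Finset.mem_biUnion.mpr ⟨(k, u, v, e0), ?_, ?_⟩
    · simp only [hT, Finset.mem_product, Finset.mem_range, Finset.mem_univ,
        mem_edgeFinset, true_and]
      exact ⟨hk, he0⟩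
    · simp only [hA, Finset.mem_filter, Finset.mem_univ, true_and]
      exact hamb
  have hbound : ∀ t ∈ T, (A t).card * W.card ≤ N := by
    intro t ht
    simp only [hT, Finset.mem_product, Finset.mem_range, Finset.mem_univ,
      mem_edgeFinset, true_and] at ht
    exact amb_card G w W t.1 t.2.1 t.2.2.1 t.2.2.2 ht.2
  have hTcard : T.card = n * (n * (n * G.edgeFinset.card)) := by
    simp [hT, Finset.card_product, hn]
  -- natural number bound
  have hnat : 2 * (bad.card * W.card) ≤ n ^ 5 * N := by
    have h1 : bad.card ≤ ∑ t ∈ T, (A t).card :=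
      le_trans (Finset.card_le_card hsub) (Finset.card_biUnion_le)
    have h2 : bad.card * W.card ≤ T.card * N := by
      calc bad.card * W.card ≤ (∑ t ∈ T, (A t).card) * W.card :=
            Nat.mul_le_mul_right _ h1
        _ = ∑ t ∈ T, (A t).card * W.card := by rw [Finset.sum_mul]
        _ ≤ ∑ t ∈ T, N := Finset.sum_le_sum hbound
        _ = T.card * N := by rw [Finset.sum_const, smul_eq_mul]
    have hE : 2 * G.edgeFinset.card ≤ n ^ 2 := by
      have := G.card_edgeFinset_le_card_choose_two
      have h3 : Nat.choose n 2 = n * (n - 1) / 2 := Nat.choose_two_right n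
      have h4 : 2 * (n * (n - 1) / 2) ≤ n * (n - 1) := by omega
      have h5 : n * (n - 1) ≤ n ^ 2 := by nlinarith [Nat.sub_le n 1]
      calc 2 * G.edgeFinset.card ≤ 2 * Nat.choose n 2 :=
            Nat.mul_le_mul_left 2 (by rw [hn]; exact this)
        _ = 2 * (n * (n - 1) / 2) := by rw [h3]
        _ ≤ n * (n - 1) := h4
        _ ≤ n ^ 2 := h5
    calc 2 * (bad.card * W.card) ≤ 2 * (T.card * N) := Nat.mul_le_mul_left 2 h2
      _ = (2 * G.edgeFinset.card) * n ^ 3 * N := by rw [hTcard]; ring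
      _ ≤ n ^ 2 * n ^ 3 * N := by
          exact Nat.mul_le_mul_right _ (Nat.mul_le_mul_right _ hE)
      _ = n ^ 5 * N := by ring
  -- go to reals
  have hWc : (0 : ℝ) < W.card := by exact_mod_cast Finset.card_pos.mpr hW
  have hreal : (bad.card : ℝ) * (2 * W.card) ≤ (n : ℝ) ^ 5 * N := by
    have h := (Nat.cast_le (α := ℝ)).mpr hnat
    push_cast at h
    nlinarith [h]
  have hgc : (good.card : ℝ) = (N : ℝ) - bad.card := by
    have := hsplit
    push_cast [← this]
    ring
  have hbadle : (bad.card : ℝ) ≤ (n : ℝ) ^ 5 / (2 * W.card) * N := by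
    rw [div_mul_eq_mul_div, le_div_iff₀ (by positivity)]
    linarith
  rw [hgc]
  have hNn : (0 : ℝ) ≤ (N : ℝ) := by positivity
  nlinarith [hbadle]
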